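/- Let v = v(z) be the unique formal power series with v(0)=0 satisfying z = v(1+v)^a (for a a positive integer). Then ∑_{n≥0} C(y-a(n-1), n) z^n = (1+v)^y · (1+v)^{a+1}/(1+(a+1)v) as formal power series in z, for any rational y. -/

import Mathlib

open PowerSeries Finset

/-- Generalized binomial coefficient `C(x,n) = x(x-1)⋯(x-n+1)/n!`. -/
noncomputable def gchoose (x : ℚ) (n : ℕ) : ℚ :=
  (∏ i ∈ Finset.range n, (x - i)) / n.factorial

/-- The binomial-series power `(1+w)^y := ∑_k C(y,k) w^k` of `1 + w`, for `w` a power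
series with zero constant term. -/
noncomputable def binPow (w : PowerSeries ℚ) (y : ℚ) : PowerSeries ℚ :=
  PowerSeries.mk fun n =>
    ∑ k ∈ Finset.range (n + 1), gchoose y k * PowerSeries.coeff n (w ^ k)

/-! ### Basic facts about `gchoose` -/

lemma gchoose_zero (x : ℚ) : gchoose x 0 = 1 := by simp [gchoose]

lemma gchoose_succ (x : ℚ) (n : ℕ) :
    gchoose x (n+1) = x * gchoose (x - 1) n / (n+1) := by
  unfold gchoose
  rw [Finset.prod_range_succ', Nat.factorial_succ]
  have : ∏ i ∈ range n, (x - 1 - (i:ℚ)) = ∏ i ∈ range n, (x - ((i:ℚ)+1)) := by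
    apply Finset.prod_congr rfl; intro i _; ring
  rw [this]
  push_cast
  field_simp
  ring

lemma gchoose_succ' (x : ℚ) (n : ℕ) :
    gchoose x (n+1) = gchoose x n * (x - n) / (n+1) := by
  unfold gchoose
  rw [Finset.prod_range_succ, Nat.factorial_succ]
  push_cast
  rw [div_mul_eq_mul_div, div_div]
  rw [mul_comm ((n:ℚ)+1)]

lemma gchoose_pascal (x : ℚ) (n : ℕ) :
    gchoose x (n+1) = gchoose (x-1) (n+1) + gchoose (x-1) n := by
  rw [gchoose_succ, gchoose_succ' (x-1) n]
  have hn : ((n:ℚ)+1) ≠ 0 := by positivity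
  field_simp
  ring

lemma gchoose_zero_succ (n : ℕ) : gchoose 0 (n+1) = 0 := by
  unfold gchoose
  rw [Finset.prod_eq_zero (Finset.mem_range.2 (Nat.succ_pos n))] <;> simp

/-! ### The coefficient formula for `binPow` -/

noncomputable def bb (a : ℕ) : ℕ → ℚ → ℚ
  | 0, _ => 1
  | n+1, y => y / (n+1) * gchoose (y - (a:ℚ)*(n+1) - 1) n

lemma bb_step (a : ℕ) (n : ℕ) (y : ℚ) :
    bb a (n+1) (y+1) - bb a (n+1) y = bb a n (y - a) := by
  cases n with
  | zero =>
    simp only [bb, gchoose_zero]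
    norm_num
  | succ k =>
    simp only [bb]
    set m : ℚ := y - (a:ℚ)*(k+1+1) - 1 with hm
    have e1 : y + 1 - (a:ℚ)*(↑(k+1)+1) - 1 = m + 1 := by rw [hm]; push_cast; ring
    have e2 : y - (a:ℚ)*(↑(k+1)+1) - 1 = m := by rw [hm]; push_cast; ring
    have e3 : y - (a:ℚ) - (a:ℚ)*(↑k+1) - 1 = m := by rw [hm]; push_cast; ring
    rw [e1, e2, e3]
    have hp : gchoose (m+1) (k+1) = gchoose m (k+1) + gchoose m k := by
      have := gchoose_pascal (m+1) k
      simpa using this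
    rw [hp, gchoose_succ' m k]
    have hk1 : ((k:ℚ)+1) ≠ 0 := by positivity
    have hk2 : ((k:ℚ)+1+1) ≠ 0 := by positivity
    push_cast
    rw [hm]
    field_simp
    ring

lemma periodic_poly_zero (f : ℚ → ℚ) (P : Polynomial ℚ) (hP : ∀ y, f y = P.eval y)
    (hstep : ∀ y, f (y+1) = f y) (h0 : f 0 = 0) : ∀ y, f y = 0 := by
  have hnat : ∀ m : ℕ, P.eval (m:ℚ) = P.eval 0 := by
    intro m
    induction m with
    | zero => simp
    | succ m ih =>
      have := hstep (m : ℚ)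
      rw [hP, hP] at this
      push_cast
      rw [this, ih]
  have hQ : P - Polynomial.C (P.eval 0) = 0 := by
    apply Polynomial.eq_zero_of_infinite_isRoot
    apply Set.infinite_of_injective_forall_mem (f := (Nat.cast : ℕ → ℚ))
      Nat.cast_injective
    intro m
    simp [Polynomial.IsRoot, hnat m]
  intro y
  have : P.eval y = P.eval 0 := by
    have := sub_eq_zero.mp hQ
    conv_lhs => rw [this]
    simp
  rw [hP, this, ← hP 0, h0]

noncomputable def gpoly (k : ℕ) : Polynomial ℚ :=
  Polynomial.C ((k.factorial : ℚ))⁻¹ * ∏ i ∈ Finset.range k, (Polynomial.X - Polynomial.C (i:ℚ))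

lemma gpoly_eval (k : ℕ) (y : ℚ) : (gpoly k).eval y = gchoose y k := by
  simp [gpoly, gchoose, Polynomial.eval_prod, div_eq_mul_inv, mul_comm]

lemma exists_poly_bb (a n : ℕ) : ∃ P : Polynomial ℚ, ∀ y, bb a n y = P.eval y := by
  cases n with
  | zero => exact ⟨1, fun y => by simp [bb]⟩
  | succ n =>
    refine ⟨Polynomial.C (((n:ℚ)+1))⁻¹ * Polynomial.X *
      (gpoly n).comp (Polynomial.X - Polynomial.C ((a:ℚ)*(n+1) + 1)), fun y => ?_⟩
    simp only [bb, Polynomial.eval_mul, Polynomial.eval_C, Polynomial.eval_X,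
      Polynomial.eval_comp, Polynomial.eval_sub, gpoly_eval]
    have : y - ((a:ℚ)*(n+1) + 1) = y - (a:ℚ)*(n+1) - 1 := by ring
    rw [this, div_eq_mul_inv]
    ring

/-! ### Power series lemmas -/

section PS
variable (v : PowerSeries ℚ) (hv0 : PowerSeries.constantCoeff v = 0)

lemma coeff_binPow (y : ℚ) (n : ℕ) :
    PowerSeries.coeff n (binPow v y)
      = ∑ k ∈ Finset.range (n+1), gchoose y k * PowerSeries.coeff n (v^k) := by
  simp [binPow]

include hv0 in
lemma coeff_pow_v {k n : ℕ} (h : n < k) : PowerSeries.coeff n (v ^ k) = 0 := by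
  induction k generalizing n with
  | zero => omega
  | succ k ih =>
    rw [pow_succ, PowerSeries.coeff_mul]
    apply Finset.sum_eq_zero
    rintro ⟨i, j⟩ hij
    rw [Finset.HasAntidiagonal.mem_antidiagonal] at hij
    rcases Nat.eq_zero_or_pos j with hj | hj
    · subst hj; simp [hv0]
    · have hi : i < k := by omega
      rw [ih hi, zero_mul]

include hv0 in
lemma coeff_mul_binPow (f : PowerSeries ℚ) (y : ℚ) (n : ℕ) :
    PowerSeries.coeff n (f * binPow v y)
      = ∑ k ∈ Finset.range (n+1), gchoose y k * PowerSeries.coeff n (f * v^k) := by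
  rw [PowerSeries.coeff_mul]
  have h1 : ∀ p ∈ Finset.HasAntidiagonal.antidiagonal n,
      PowerSeries.coeff p.1 f * PowerSeries.coeff p.2 (binPow v y)
        = ∑ k ∈ Finset.range (n+1),
            gchoose y k * (PowerSeries.coeff p.1 f * PowerSeries.coeff p.2 (v^k)) := by
    rintro ⟨i, j⟩ hij
    rw [Finset.HasAntidiagonal.mem_antidiagonal] at hij
    simp only [binPow, PowerSeries.coeff_mk]
    rw [Finset.mul_sum]
    rw [Finset.sum_subset (Finset.range_subset_range.2 (by omega : j + 1 ≤ n + 1))]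
    · exact Finset.sum_congr rfl fun k _ => by ring
    · intro k hk hk'
      have : j < k := by simp only [Finset.mem_range] at hk hk'; omega
      rw [coeff_pow_v v hv0 this, mul_zero, mul_zero]
  rw [Finset.sum_congr rfl h1, Finset.sum_comm]
  exact Finset.sum_congr rfl fun k _ => by
    rw [PowerSeries.coeff_mul, Finset.mul_sum]

lemma binPow_zero : binPow v 0 = 1 := by
  ext n
  rw [coeff_binPow]
  rw [Finset.sum_eq_single 0]
  · simp [gchoose_zero]
  · intro k _ hk
    obtain ⟨m, rfl⟩ := Nat.exists_eq_succ_of_ne_zero hk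
    rw [gchoose_zero_succ, zero_mul]
  · intro h; simp at h

include hv0 in
lemma binPow_succ (y : ℚ) : (1 + v) * binPow v y = binPow v (y+1) := by
  ext n
  rw [coeff_mul_binPow v hv0, coeff_binPow]
  have hsplit : ∀ k : ℕ, PowerSeries.coeff n ((1 + v) * v ^ k)
      = PowerSeries.coeff n (v^k) + PowerSeries.coeff n (v^(k+1)) := by
    intro k
    rw [one_add_mul, pow_succ, map_add, mul_comm v (v^k)]
  simp only [hsplit, mul_add]
  rw [Finset.sum_add_distrib]
  rw [Finset.sum_range_succ' (fun k => gchoose (y+1) k * PowerSeries.coeff n (v^k)) n]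
  rw [Finset.sum_range_succ' (fun k => gchoose y k * PowerSeries.coeff n (v^k)) n]
  rw [Finset.sum_range_succ (fun k => gchoose y k * PowerSeries.coeff n (v^(k+1))) n]
  rw [coeff_pow_v v hv0 (Nat.lt_succ_self n), mul_zero, add_zero]
  have : ∀ k : ℕ, gchoose (y+1) (k+1) * PowerSeries.coeff n (v^(k+1))
      = gchoose y (k+1) * PowerSeries.coeff n (v^(k+1))
        + gchoose y k * PowerSeries.coeff n (v^(k+1)) := by
    intro k
    rw [show gchoose (y+1) (k+1) = gchoose y (k+1) + gchoose y k from by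
      simpa using gchoose_pascal (y+1) k, add_mul]
  simp only [this]
  rw [Finset.sum_add_distrib, gchoose_zero, gchoose_zero]
  ring

include hv0 in
lemma binPow_pow (y : ℚ) (m : ℕ) : binPow v y * (1 + v) ^ m = binPow v (y + m) := by
  induction m with
  | zero => simp
  | succ m ih =>
    rw [pow_succ, ← mul_assoc, mul_comm (binPow v y * (1+v)^m) (1+v), ih,
      binPow_succ v hv0]
    push_cast
    ring_nf

variable (a : ℕ) (hv : (PowerSeries.X : PowerSeries ℚ) = v * (1 + v) ^ a)

include hv0 hv in
lemma v_mul_binPow (y : ℚ) : v * binPow v y = PowerSeries.X * binPow v (y - a) := by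
  have h1 : binPow v (y - a) * (1+v)^a = binPow v y := by
    rw [binPow_pow v hv0]; ring_nf
  calc v * binPow v y = v * (binPow v (y - a) * (1+v)^a) := by rw [h1]
    _ = (v * (1+v)^a) * binPow v (y - a) := by ring
    _ = PowerSeries.X * binPow v (y - a) := by rw [← hv]

include hv0 hv in
lemma binPow_diff (y : ℚ) :
    binPow v (y+1) - binPow v y = PowerSeries.X * binPow v (y - a) := by
  rw [← binPow_succ v hv0 y, ← v_mul_binPow v hv0 a hv y]
  ring

include hv0 hv in
lemma coeff_binPow_bb : ∀ (n : ℕ) (y : ℚ),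
    PowerSeries.coeff n (binPow v y) = bb a n y := by
  intro n
  induction n with
  | zero =>
    intro y
    rw [coeff_binPow]
    simp [bb, gchoose_zero]
  | succ n ih =>
    have key : ∀ y : ℚ,
        (fun y => PowerSeries.coeff (n+1) (binPow v y) - bb a (n+1) y) y = 0 := by
      obtain ⟨P1, hP1⟩ : ∃ P : Polynomial ℚ, ∀ y,
          PowerSeries.coeff (n+1) (binPow v y) = P.eval y := by
        refine ⟨∑ k ∈ Finset.range (n+2),
          Polynomial.C (PowerSeries.coeff (n+1) (v^k)) * gpoly k, fun y => ?_⟩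
        rw [coeff_binPow]
        rw [Polynomial.eval_finset_sum]
        exact Finset.sum_congr rfl fun k _ => by
          simp [gpoly_eval, mul_comm]
      obtain ⟨P2, hP2⟩ := exists_poly_bb a (n+1)
      apply periodic_poly_zero _ (P1 - P2)
      · intro y; simp [hP1, hP2]
      · intro y
        have h1 : PowerSeries.coeff (n+1) (binPow v (y+1))
            - PowerSeries.coeff (n+1) (binPow v y) = bb a n (y - a) := by
          have hd := binPow_diff v hv0 a hv y
          have := congrArg (PowerSeries.coeff (n+1)) hd
          rw [map_sub, PowerSeries.coeff_succ_X_mul, ih] at this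
          exact this
        have h2 := bb_step a n y
        linarith
      · rw [binPow_zero]
        have hb : bb a (n+1) 0 = 0 := by simp [bb]
        rw [hb]
        simp [PowerSeries.coeff_one]
    intro y
    have := key y
    simp only [sub_eq_zero] at this
    exact this

end PS

/-! ### Main theorem -/

/-- If `v` is the formal power series with `v(0) = 0` satisfying `z = v(1+v)^a`
(`a` a positive integer), then
`∑_{n≥0} C(y-a(n-1),n) z^n = (1+v)^y · (1+v)^{a+1} / (1+(a+1)v)` for any rational `y`. -/
theorem stmt6 (a : ℕ) (ha : 0 < a) (y : ℚ) (v : PowerSeries ℚ)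
    (hv0 : PowerSeries.constantCoeff v = 0)
    (hv : (PowerSeries.X : PowerSeries ℚ) = v * (1 + v) ^ a) :
    (PowerSeries.mk fun n => gchoose (y - (a : ℚ) * ((n : ℚ) - 1)) n) =
      binPow v y * (1 + v) ^ (a + 1) * (1 + PowerSeries.C ((a : ℚ) + 1) * v)⁻¹ := by
  set U : PowerSeries ℚ := 1 + PowerSeries.C ((a : ℚ) + 1) * v with hU
  have hUc : PowerSeries.constantCoeff U ≠ 0 := by
    rw [hU]
    simp [hv0]
  have hUinv : U⁻¹ * U = 1 := PowerSeries.inv_mul_cancel U hUc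
  have hrw : binPow v y * (1 + v) ^ (a + 1) = binPow v (y + a + 1) := by
    rw [binPow_pow v hv0 y (a+1)]
    push_cast
    ring_nf
  rw [hrw]
  clear hrw
  -- key recurrence: for any w, B_{w+a+1} * U⁻¹ satisfies
  -- B_{w+a+1} * U⁻¹ = B_{w+a+1} - C(a+1) * X * (B_{w+1} * U⁻¹)
  have key : ∀ w : ℚ, binPow v (w + a + 1) * U⁻¹
      = binPow v (w + a + 1)
        - PowerSeries.C ((a:ℚ)+1) * (PowerSeries.X * (binPow v (w + 1) * U⁻¹)) := by
    intro w
    have hvB : v * binPow v (w + a + 1) = PowerSeries.X * binPow v (w + 1) := by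
      have := v_mul_binPow v hv0 a hv (w + a + 1)
      have harg : w + (a:ℚ) + 1 - a = w + 1 := by ring
      rwa [harg] at this
    have expand : U * (binPow v (w + a + 1) * U⁻¹) = binPow v (w + a + 1) := by
      calc U * (binPow v (w + a + 1) * U⁻¹)
          = binPow v (w + a + 1) * (U⁻¹ * U) := by ring
        _ = binPow v (w + a + 1) := by rw [hUinv, mul_one]
    have expand2 : U * (binPow v (w + a + 1) * U⁻¹)
        = binPow v (w + a + 1) * U⁻¹
          + PowerSeries.C ((a:ℚ)+1) * (v * binPow v (w + a + 1)) * U⁻¹ := by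
      rw [hU]; ring
    rw [expand2, hvB] at expand
    calc binPow v (w + a + 1) * U⁻¹
        = (binPow v (w + a + 1) * U⁻¹
            + PowerSeries.C ((a:ℚ)+1) * (PowerSeries.X * binPow v (w + 1)) * U⁻¹)
          - PowerSeries.C ((a:ℚ)+1) * (PowerSeries.X * (binPow v (w + 1) * U⁻¹)) := by
          ring
      _ = binPow v (w + a + 1)
            - PowerSeries.C ((a:ℚ)+1) * (PowerSeries.X * (binPow v (w + 1) * U⁻¹)) := by
          rw [expand]
  -- now prove coefficientwise by induction on n, generalizing y
  ext n
  rw [PowerSeries.coeff_mk]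
  induction n generalizing y with
  | zero =>
    have : PowerSeries.constantCoeff (binPow v (y + a + 1) * U⁻¹) = 1 := by
      rw [map_mul, PowerSeries.constantCoeff_inv]
      have h1 : PowerSeries.constantCoeff (binPow v (y + a + 1)) = 1 := by
        have := coeff_binPow_bb v hv0 a hv 0 (y + a + 1)
        simpa [bb, PowerSeries.coeff_zero_eq_constantCoeff] using this
      have h2 : PowerSeries.constantCoeff U = 1 := by rw [hU]; simp [hv0]
      rw [h1, h2]
      norm_num
    rw [PowerSeries.coeff_zero_eq_constantCoeff, this, gchoose_zero]
  | succ n ih =>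
    rw [key y, map_sub, PowerSeries.coeff_C_mul, PowerSeries.coeff_succ_X_mul]
    have harg : y + 1 = (y - a) + a + 1 := by ring
    rw [harg, ← ih (y - a)]
    rw [coeff_binPow_bb v hv0 a hv (n+1) (y + a + 1)]
    -- now pure gchoose algebra
    have e1 : (y - a) - (a:ℚ) * ((n:ℚ) - 1) = y - (a:ℚ)*n := by ring
    have e2 : y - (a:ℚ) * ((↑(n+1):ℚ) - 1) = y - (a:ℚ)*n := by push_cast; ring
    rw [e1, e2]
    simp only [bb]
    have e3 : y + (a:ℚ) + 1 - (a:ℚ)*((n:ℚ)+1) - 1 = y - (a:ℚ)*n := by ring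
    rw [e3, gchoose_succ' (y - (a:ℚ)*n) n]
    have hn : ((n:ℚ)+1) ≠ 0 := by positivity
    field_simp
    ring
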